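/- Let p be a prime and k, n positive integers. For every subgroup K of (ℤ/p^kℤ)^n there exist a natural number m ≤ n, integers β_1, …, β_m with k ≥ β_1 ≥ β_2 ≥ ⋯ ≥ β_m ≥ 1, and an invertible matrix Q ∈ GL(n, ℤ/p^kℤ) such that K is generated, as a subgroup of (ℤ/p^kℤ)^n, by the m vectors p^{k−β_1}·Q_1, …, p^{k−β_m}·Q_m, where Q_i denotes the i-th row of Q. -/

import Mathlib

open Finset in
private lemma initseg {N k : ℕ} (g : Fin N → ℕ) (hg : Monotone g) (i : Fin N) :
    i.val < (Finset.univ.filter fun j => g j < k).card ↔ g i < k := by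
  classical
  constructor
  · intro hi
    by_contra h
    push_neg at h
    have hsub : (Finset.univ.filter fun j => g j < k) ⊆ Finset.Iio i := by
      intro j hj
      simp only [Finset.mem_filter, Finset.mem_univ, true_and] at hj
      rw [Finset.mem_Iio]
      by_contra hji
      push_neg at hji
      exact absurd (lt_of_le_of_lt (le_trans h (hg hji)) hj) (lt_irrefl _)
    have := Finset.card_le_card hsub
    rw [Fin.card_Iio] at this
    omega
  · intro h
    have hsub : Finset.Iic i ⊆ (Finset.univ.filter fun j => g j < k) := by
      intro j hj
      rw [Finset.mem_Iic] at hj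
      simp only [Finset.mem_filter, Finset.mem_univ, true_and]
      exact lt_of_le_of_lt (hg hj) h
    have := Finset.card_le_card hsub
    rw [Fin.card_Iic] at this
    omega

private lemma zmod_decomp (p k : ℕ) (hp : p.Prime) (a : ℤ) (ha : a ≠ 0) :
    ∃ u : ZMod (p^k), IsUnit u ∧
      (a : ZMod (p^k)) = (p : ZMod (p^k)) ^ (a.natAbs.factorization p) * u := by
  haveI : NeZero (p ^ k) := ⟨pow_ne_zero k hp.ne_zero⟩
  set v := a.natAbs.factorization p with hv
  have hna : a.natAbs ≠ 0 := Int.natAbs_ne_zero.mpr ha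
  have hdvd : (p : ℤ) ^ v ∣ a := by
    have h2 : ((p ^ v : ℕ) : ℤ) ∣ (a.natAbs : ℤ) :=
      Int.natCast_dvd_natCast.mpr (Nat.ordProj_dvd a.natAbs p)
    push_cast at h2
    rw [Int.abs_eq_natAbs] at h2
    exact Int.dvd_natAbs.mp h2
  set b := a / (p : ℤ) ^ v with hb
  have hab : a = (p : ℤ) ^ v * b := (Int.mul_ediv_cancel' hdvd).symm
  have hbabs : b.natAbs = a.natAbs / p ^ v := by
    rw [hb, Int.natAbs_ediv_of_dvd hdvd]
    simp [Int.natAbs_pow]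
  have hnd : ¬ p ∣ b.natAbs := by
    rw [hbabs]
    exact Nat.not_dvd_ordCompl hp hna
  have hcop : Nat.Coprime b.natAbs (p ^ k) :=
    Nat.Coprime.pow_right k (((Nat.Prime.coprime_iff_not_dvd hp).mpr hnd).symm)
  have hu : IsUnit ((b.natAbs : ℕ) : ZMod (p ^ k)) :=
    (ZMod.isUnit_iff_coprime _ _).mpr hcop
  have hub : IsUnit ((b : ℤ) : ZMod (p ^ k)) := by
    rcases Int.natAbs_eq b with h | h
    · rw [h, Int.cast_natCast]; exact hu
    · rw [h]; rw [Int.cast_neg, Int.cast_natCast]; exact hu.neg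
  refine ⟨(b : ZMod (p ^ k)), hub, ?_⟩
  rw [hab]
  push_cast
  ring

theorem stmt3 (p : ℕ) (hp : p.Prime) (k n : ℕ) (hk : 0 < k) (hn : 0 < n)
    (K : AddSubgroup (Fin n → ZMod (p ^ k))) :
    ∃ (m : ℕ) (hm : m ≤ n) (β : Fin m → ℕ),
      (∀ i, β i ≤ k) ∧ (∀ i, 1 ≤ β i) ∧ Antitone β ∧
      ∃ Q : (Matrix (Fin n) (Fin n) (ZMod (p ^ k)))ˣ,
        K = AddSubgroup.closure (Set.range fun i : Fin m =>
          ((p : ZMod (p ^ k)) ^ (k - β i)) •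
            (Q : Matrix (Fin n) (Fin n) (ZMod (p ^ k))) (Fin.castLE hm i)) := by
  classical
  -- the reduction homomorphism
  let π : (Fin n → ℤ) →+ (Fin n → ZMod (p ^ k)) :=
    { toFun := fun x i => ((x i : ℤ) : ZMod (p ^ k))
      map_zero' := by funext i; simp
      map_add' := by intro x y; funext i; push_cast; simp }
  have hπs : Function.Surjective π := by
    intro y
    refine ⟨fun i => (ZMod.intCast_surjective (y i)).choose, ?_⟩
    funext i
    exact (ZMod.intCast_surjective (y i)).choose_spec
  set N : Submodule ℤ (Fin n → ℤ) := AddSubgroup.toIntSubmodule (K.comap π) with hNdef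
  have hNK : AddSubgroup.map π (K.comap π) = K :=
    AddSubgroup.map_comap_eq_self_of_surjective hπs K
  obtain ⟨n', bM, bN, f, a, hsnf⟩ := Submodule.smithNormalForm (Pi.basisFun ℤ (Fin n)) N
  have hn'n : n' ≤ n := by simpa using Fintype.card_le_of_embedding f
  -- N as a span
  have hNspan : (N : Submodule ℤ (Fin n → ℤ)) =
      Submodule.span ℤ (Set.range fun i => a i • bM (f i)) := by
    have h1 : Submodule.map N.subtype ⊤ = N := Submodule.map_subtype_top N
    rw [← h1, ← bN.span_eq, Submodule.map_span]
    congr 1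
    rw [← Set.range_comp]
    exact congrArg _ (funext fun i => hsnf i)
  -- K as a closure
  have hK1 : K = AddSubgroup.closure (Set.range fun i => π (a i • bM (f i))) := by
    rw [← hNK]
    have h2 : (K.comap π) = (Submodule.span ℤ
        (Set.range fun i => a i • bM (f i))).toAddSubgroup := by
      rw [← hNspan]; rfl
    rw [h2, Submodule.span_int_eq_addSubgroupClosure, AddMonoidHom.map_closure,
      ← Set.range_comp]
    rfl
  -- nonvanishing of the coefficients
  have ha0 : ∀ i, a i ≠ 0 := by
    intro i hai
    have h := hsnf i
    rw [hai, zero_smul] at h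
    exact bN.ne_zero i (ZeroMemClass.coe_eq_zero.mp h)
  -- decompose coefficients as unit times power of p
  set v : Fin n' → ℕ := fun i => (a i).natAbs.factorization p with hvdef
  choose u hu hcu using fun i => zmod_decomp p k hp (a i) (ha0 i)
  -- sort
  set τ : Equiv.Perm (Fin n') := Tuple.sort v with hτdef
  have hmono : Monotone (v ∘ τ) := Tuple.monotone_sort v
  set m := (Finset.univ.filter fun j : Fin n' => (v ∘ τ) j < k).card with hmdef
  have hmn' : m ≤ n' := by
    rw [hmdef]
    simpa using Finset.card_filter_le Finset.univ (fun j : Fin n' => (v ∘ τ) j < k)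
  have hm : m ≤ n := hmn'.trans hn'n
  set β : Fin m → ℕ := fun j => k - v (τ (Fin.castLE hmn' j)) with hβdef
  -- the integer matrix of the basis bM and its reduction
  set B : Matrix (Fin n) (Fin n) ℤ := Matrix.of fun i j => bM i j with hBdef
  have hBt : (Pi.basisFun ℤ (Fin n)).toMatrix bM = B.transpose := by
    ext i j
    simp [Module.Basis.toMatrix_apply, hBdef]
  have hBdet : IsUnit B.det := by
    have hinv : Invertible ((Pi.basisFun ℤ (Fin n)).toMatrix bM) :=
      (Pi.basisFun ℤ (Fin n)).invertibleToMatrix bM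
    have h := isUnit_of_invertible ((Pi.basisFun ℤ (Fin n)).toMatrix bM)
    rw [hBt] at h
    have := (Matrix.isUnit_iff_isUnit_det _).mp h
    rwa [Matrix.det_transpose] at this
  set Q0 : Matrix (Fin n) (Fin n) (ZMod (p ^ k)) :=
    B.map (fun x : ℤ => (x : ZMod (p ^ k))) with hQ0def
  have hQ0det : IsUnit Q0.det := by
    have h := hBdet.map (Int.castRingHom (ZMod (p ^ k)))
    rwa [RingHom.map_det] at h
  -- rows of Q0 are the reductions of the basis vectors
  have hQ0row : ∀ i : Fin n',
      π (a i • bM (f i)) = ((a i : ℤ) : ZMod (p ^ k)) • Q0 (f i) := by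
    intro i
    funext l
    show (((a i • bM (f i)) l : ℤ) : ZMod (p ^ k)) = _
    simp only [Pi.smul_apply, smul_eq_mul, hQ0def, Matrix.map_apply, Matrix.of_apply, hBdef]
    push_cast
    ring
  -- the permutation of Fin n
  set e1 : Fin n' ↪ Fin n := Fin.castLEEmb hn'n with he1def
  set e2 : Fin n' ↪ Fin n := τ.toEmbedding.trans f with he2def
  set σ : Equiv.Perm (Fin n) :=
    Equiv.extendSubtype ((e1.toEquivRange.symm).trans e2.toEquivRange) with hσdef
  have hσ : ∀ j : Fin n', σ (e1 j) = e2 j := by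
    intro j
    rw [hσdef, Equiv.extendSubtype_apply_of_mem _ _ ⟨j, rfl⟩]
    simp
  -- the unit diagonal scaling
  set d : Fin n → ZMod (p ^ k) :=
    fun j => if h : (j : ℕ) < n' then u (τ ⟨(j : ℕ), h⟩) else 1 with hddef
  have hdunit : ∀ j, IsUnit (d j) := by
    intro j
    rw [hddef]
    dsimp only
    split
    · exact hu _
    · exact isUnit_one
  set Qmat : Matrix (Fin n) (Fin n) (ZMod (p ^ k)) :=
    Matrix.of fun i j => d i * Q0 (σ i) j with hQmatdef
  have hQmat2 : Qmat = Matrix.diagonal d * Q0.submatrix σ id := by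
    ext i j
    rw [Matrix.diagonal_mul]
    rfl
  have hQdet : IsUnit Qmat.det := by
    rw [hQmat2, Matrix.det_mul, Matrix.det_permute, Matrix.det_diagonal]
    refine IsUnit.mul ?_ (IsUnit.mul ?_ hQ0det)
    · exact Finset.prod_induction d IsUnit (fun x y hx hy => hx.mul hy) isUnit_one
        (fun j _ => hdunit j)
    · exact ((Equiv.Perm.sign σ).isUnit.map (Int.castRingHom (ZMod (p ^ k))))
  have hQ : IsUnit Qmat := (Matrix.isUnit_iff_isUnit_det _).mpr hQdet
  -- generators
  set G1 : Fin n' → (Fin n → ZMod (p ^ k)) :=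
    fun i => ((a i : ℤ) : ZMod (p ^ k)) • Q0 (f i) with hG1def
  have hK2 : K = AddSubgroup.closure (Set.range G1) := by
    rw [hK1]
    congr 1
    exact congrArg _ (funext hQ0row)
  have hpk0 : (p : ZMod (p ^ k)) ^ k = 0 := by
    have h := ZMod.natCast_self (p ^ k)
    push_cast at h
    exact h
  have hzero : ∀ i : Fin n', ¬ (v i < k) → ((a i : ℤ) : ZMod (p ^ k)) = 0 := by
    intro i hi
    push_neg at hi
    rw [hcu i]
    have hvi : (a i).natAbs.factorization p = k + ((a i).natAbs.factorization p - k) := by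
      have : v i = (a i).natAbs.factorization p := rfl
      omega
    rw [hvi, pow_add, hpk0]
    ring
  -- the key generator identity
  have hG : ∀ j : Fin m,
      ((p : ZMod (p ^ k)) ^ (k - β j)) • Qmat (Fin.castLE hm j)
        = G1 (τ (Fin.castLE hmn' j)) := by
    intro j
    have hvk : v (τ (Fin.castLE hmn' j)) < k := by
      have h := (initseg (k := k) (v ∘ τ) hmono (Fin.castLE hmn' j)).mp j.isLt
      simpa using h
    have hβj : k - β j = v (τ (Fin.castLE hmn' j)) := by
      have h1 : β j = k - v (τ (Fin.castLE hmn' j)) := rfl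
      omega
    have he1j : Fin.castLE hm j = e1 (Fin.castLE hmn' j) := by
      rw [he1def]
      apply Fin.ext
      rfl
    have hσ1 : σ (Fin.castLE hm j) = f (τ (Fin.castLE hmn' j)) := by
      rw [he1j, hσ (Fin.castLE hmn' j)]
      rfl
    have hjn' : ((Fin.castLE hm j : Fin n) : ℕ) < n' := lt_of_lt_of_le j.isLt hmn'
    have hd1 : d (Fin.castLE hm j) = u (τ (Fin.castLE hmn' j)) := by
      rw [hddef]
      dsimp only
      rw [dif_pos hjn']
      congr 1
    funext l
    show ((p : ZMod (p ^ k)) ^ (k - β j)) *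
        (d (Fin.castLE hm j) * Q0 (σ (Fin.castLE hm j)) l) = _
    rw [hβj, hd1, hσ1, hG1def]
    show _ = ((a (τ (Fin.castLE hmn' j)) : ℤ) : ZMod (p ^ k)) *
        Q0 (f (τ (Fin.castLE hmn' j))) l
    rw [hcu (τ (Fin.castLE hmn' j))]
    ring
  -- finish
  refine ⟨m, hm, β, fun i => Nat.sub_le _ _, ?_, ?_, hQ.unit, ?_⟩
  · intro i
    have hvk : v (τ (Fin.castLE hmn' i)) < k := by
      have h := (initseg (k := k) (v ∘ τ) hmono (Fin.castLE hmn' i)).mp i.isLt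
      simpa using h
    have h1 : β i = k - v (τ (Fin.castLE hmn' i)) := rfl
    omega
  · intro i j hij
    have h1 : β i = k - v (τ (Fin.castLE hmn' i)) := rfl
    have h2 : β j = k - v (τ (Fin.castLE hmn' j)) := rfl
    have h3 : v (τ (Fin.castLE hmn' i)) ≤ v (τ (Fin.castLE hmn' j)) := by
      have h4 : (Fin.castLE hmn' i) ≤ (Fin.castLE hmn' j) := by
        exact hij
      exact hmono h4
    omega
  · rw [IsUnit.unit_spec, hK2]
    apply le_antisymm
    · rw [AddSubgroup.closure_le]
      rintro x ⟨i, rfl⟩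
      by_cases hvi : v i < k
      · have hi0 : ((τ.symm i : Fin n') : ℕ) < m := by
          have h5 : (v ∘ τ) (τ.symm i) < k := by
            simp only [Function.comp_apply, Equiv.apply_symm_apply]
            exact hvi
          exact (initseg (k := k) (v ∘ τ) hmono (τ.symm i)).mpr h5
        refine AddSubgroup.subset_closure ⟨⟨(τ.symm i : ℕ), hi0⟩, ?_⟩
        show ((p : ZMod (p ^ k)) ^ (k - β ⟨(τ.symm i : ℕ), hi0⟩)) •
            Qmat (Fin.castLE hm ⟨(τ.symm i : ℕ), hi0⟩) = G1 i
        rw [hG ⟨(τ.symm i : ℕ), hi0⟩]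
        congr 1
        have h6 : Fin.castLE hmn' ⟨(τ.symm i : ℕ), hi0⟩ = τ.symm i := by
          apply Fin.ext
          rfl
        rw [h6, Equiv.apply_symm_apply]
      · have h0 : G1 i = 0 := by
          rw [hG1def]
          dsimp only
          rw [hzero i hvi, zero_smul]
        rw [h0]
        exact zero_mem _
    · rw [AddSubgroup.closure_le]
      rintro x ⟨j, rfl⟩
      show ((p : ZMod (p ^ k)) ^ (k - β j)) • Qmat (Fin.castLE hm j) ∈ _
      rw [hG j]
      exact AddSubgroup.subset_closure (Set.mem_range_self _)
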